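/- Let v be a vertex of a standard Hanner polytope H in ℝⁿ, and let A_v be the affine subspace associated to the zero-dimensional face {v}. Then A_v ∩ ℝ^(v) equals the orthogonal projection of A_v onto ℝ^(v), where ℝ^(v) = span{e_j : ⟨v, e_j⟩ ≠ 0}. -/

import Mathlib

open MeasureTheory Set Submodule
open scoped RealInnerProductSpace Pointwise Classical

noncomputable section

abbrev Euc (n : ℕ) := EuclideanSpace ℝ (Fin n)

variable {n : ℕ}

/-- A convex body: a compact convex set with nonempty interior. -/
def IsConvexBody (K : Set (Euc n)) : Prop :=
  Convex ℝ K ∧ IsCompact K ∧ (interior K).Nonempty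

/-- The polar of a set. -/
def polarSet (K : Set (Euc n)) : Set (Euc n) := {y | ∀ x ∈ K, ⟪x, y⟫ ≤ 1}

/-- Volume (as a real number). -/
def vol (A : Set (Euc n)) : ℝ := (volume A).toReal

/-- The volume product of a symmetric convex body. -/
def volProd (K : Set (Euc n)) : ℝ := vol K * vol (polarSet K)

/-- Banach–Mazur distance between symmetric convex bodies. -/
def bmDist (K L : Set (Euc n)) : ℝ :=
  sInf {c : ℝ | 1 ≤ c ∧ ∃ T : (Euc n) ≃ₗ[ℝ] (Euc n), L ⊆ T '' K ∧ T '' K ⊆ c • L}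

/-- The dimension of a set: dimension of the linear span of `A - A`. -/
def setDim (A : Set (Euc n)) : ℕ :=
  Module.finrank ℝ (Submodule.span ℝ (A - A) : Submodule ℝ (Euc n))

/-- Dimension with the convention `dim ∅ = -1`. -/
def edim (A : Set (Euc n)) : ℤ := if A = ∅ then -1 else (setDim A : ℤ)

/-- ℓ1-sum, with the convention `A ⊕₁ ∅ = A`, `∅ ⊕₁ B = B`. -/
def l1Sum (A B : Set (Euc n)) : Set (Euc n) :=
  if A = ∅ then B else if B = ∅ then A else convexHull ℝ (A ∪ B)

/-- The centroid of a set, computed with respect to the Hausdorff measure of dimension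
`setDim A` (this is the Lebesgue measure on the affine hull for convex sets). -/
def centroid (A : Set (Euc n)) : Euc n :=
  ((μH[(setDim A : ℝ)] A).toReal)⁻¹ • ∫ x in A, x ∂(μH[(setDim A : ℝ)])

/-- `F` is a (proper, nonempty) face of `P` cut out by a supporting hyperplane whose normal
vector lies in `V`. -/
def IsFaceIn (V : Submodule ℝ (Euc n)) (P F : Set (Euc n)) : Prop :=
  ∃ (u : Euc n) (b : ℝ), u ∈ V ∧ u ≠ 0 ∧ (∀ x ∈ P, ⟪x, u⟫ ≤ b) ∧
    (∃ x ∈ P, ⟪x, u⟫ = b) ∧ F = {x ∈ P | ⟪x, u⟫ = b} ∧ F ≠ P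

/-- `F` is a face of `P` (cut out by a supporting hyperplane). -/
def IsFaceOf (P F : Set (Euc n)) : Prop := IsFaceIn ⊤ P F

/-- The polar of `K` computed inside the subspace `V`. -/
def polarIn (V : Submodule ℝ (Euc n)) (K : Set (Euc n)) : Set (Euc n) :=
  {y | y ∈ V ∧ ∀ x ∈ K, ⟪x, y⟫ ≤ 1}

/-- The dual face of a face `F` of `P`, computed inside the subspace `V`. -/
def dualFaceIn (V : Submodule ℝ (Euc n)) (P F : Set (Euc n)) : Set (Euc n) :=
  {y ∈ polarIn V P | ∀ x ∈ F, ⟪x, y⟫ = 1}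

/-- The dual face `F* = {y ∈ P° : ⟨x,y⟩ = 1 ∀ x ∈ F}`. -/
def dualFace (P F : Set (Euc n)) : Set (Euc n) := dualFaceIn ⊤ P F

/-- A convex polytope: convex hull of finitely many points. -/
def IsPolytope (P : Set (Euc n)) : Prop := ∃ S : Finset (Euc n), P = convexHull ℝ (S : Set (Euc n))

/-- A flag over `P`: an increasing chain of faces `F⁰ ⊂ F¹ ⊂ ⋯ ⊂ F^{n-1}` with `dim F^k = k`. -/
def IsFlagOf (P : Set (Euc n)) (𝔽 : Fin n → Set (Euc n)) : Prop :=
  (∀ k, IsFaceOf P (𝔽 k)) ∧ (∀ k : Fin n, setDim (𝔽 k) = (k : ℕ)) ∧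
  (∀ k l : Fin n, k ≤ l → 𝔽 k ⊆ 𝔽 l)

/-- The volume of the simplex `Z_𝔽 = conv{0, z_{F⁰}, …, z_{F^{n-1}}}`. -/
def flagVol (Z : Set (Euc n) → Euc n) (𝔽 : Fin n → Set (Euc n)) : ℝ :=
  vol (convexHull ℝ (insert (0 : Euc n) (Set.range fun k => Z (𝔽 k))))

/-- The volume function `V(Z) = Σ_𝔽 |Z_𝔽|`, sum over all flags of `P`. -/
def Vfun (P : Set (Euc n)) (Z : Set (Euc n) → Euc n) : ℝ :=
  ∑ᶠ (𝔽 : Fin n → Set (Euc n)) (_ : IsFlagOf P 𝔽), flagVol Z 𝔽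

/-- The partial volume function: sum over all flags of `P` containing the face `G`. -/
def VfunG (P G : Set (Euc n)) (Z : Set (Euc n) → Euc n) : ℝ :=
  ∑ᶠ (𝔽 : Fin n → Set (Euc n)) (_ : IsFlagOf P 𝔽 ∧ G ∈ Set.range 𝔽), flagVol Z 𝔽

/-- `x_F` is the point of `(t_F • A_F) ∩ ∂K` nearest to `c_F`, where `t_F • A_F` is
tangent to `K`. -/
def TangentXPoint (K AF : Set (Euc n)) (cF : Euc n) (tF : ℝ) (xF : Euc n) : Prop :=
  0 < tF ∧ (tF • AF) ∩ interior K = ∅ ∧ xF ∈ (tF • AF) ∩ frontier K ∧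
  ∀ z ∈ (tF • AF) ∩ frontier K, dist cF xF ≤ dist cF z

/-- The pair of points `x_F, y_F` constructed from `K`, `A_F`, `c_F`. -/
def TangentPointAt (K AF : Set (Euc n)) (cF : Euc n) (tF : ℝ) (xF yF : Euc n) : Prop :=
  TangentXPoint K AF cF tF xF ∧ yF = tF • cF

/-- Conditions (a) and (b) for the affine subspace `A F` at a face `F` of `body`. -/
def GoodAt (body : Set (Euc n)) (A : Set (Euc n) → Set (Euc n)) (c : Set (Euc n) → Euc n)
    (F : Set (Euc n)) : Prop :=
  (∃ S : AffineSubspace ℝ (Euc n), A F = (S : Set (Euc n))) ∧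
  A F ∩ body = {c F} ∧ c F ∈ intrinsicInterior ℝ F ∧
  setDim (A F) + setDim F + 1 = n

/-- Conditions (a), (b), (c) for the family of affine subspaces `A_F` attached to the faces
of `P` and of `P°`. -/
def GoodFamily (P : Set (Euc n)) (A : Set (Euc n) → Set (Euc n)) (c : Set (Euc n) → Euc n) : Prop :=
  (∀ F, IsFaceOf P F → GoodAt P A c F ∧
      ∀ x ∈ A F, ∀ y ∈ A (dualFace P F), ⟪x, y⟫ = 1) ∧
  (∀ G, IsFaceOf (polarSet P) G → GoodAt (polarSet P) A c G)

/-- Hanner polytopes: symmetric segments, closed under ℓ1 and ℓ∞ sums of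
linearly independent summands. -/
inductive IsHanner : Set (Euc n) → Prop
  | seg (x : Euc n) (hx : x ≠ 0) : IsHanner (segment ℝ (-x) x)
  | l1 {A B : Set (Euc n)} (hA : IsHanner A) (hB : IsHanner B)
      (hspan : Submodule.span ℝ A ⊓ Submodule.span ℝ B = ⊥) :
      IsHanner (convexHull ℝ (A ∪ B))
  | linf {A B : Set (Euc n)} (hA : IsHanner A) (hB : IsHanner B)
      (hspan : Submodule.span ℝ A ⊓ Submodule.span ℝ B = ⊥) :
      IsHanner (A + B)

/-- The rules of Definition 4.1 defining `A` on the faces of the ℓ1-sum `H₁ ⊕₁ H₂` from the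
families `A₁, A₂` for `H₁, H₂`. -/
def L1Rules (H₁ H₂ : Set (Euc n)) (A₁ A₂ A : Set (Euc n) → Set (Euc n)) : Prop :=
  (∀ F₁, IsFaceIn (Submodule.span ℝ H₁) H₁ F₁ →
      A F₁ = A₁ F₁ + (Submodule.span ℝ H₂ : Set (Euc n))) ∧
  (∀ F₂, IsFaceIn (Submodule.span ℝ H₂) H₂ F₂ →
      A F₂ = (Submodule.span ℝ H₁ : Set (Euc n)) + A₂ F₂) ∧
  (∀ F₁ F₂, IsFaceIn (Submodule.span ℝ H₁) H₁ F₁ → IsFaceIn (Submodule.span ℝ H₂) H₂ F₂ →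
      A (convexHull ℝ (F₁ ∪ F₂)) =
        ((setDim F₁ + 1 : ℝ) / (setDim F₁ + setDim F₂ + 2)) • A₁ F₁ +
        ((setDim F₂ + 1 : ℝ) / (setDim F₁ + setDim F₂ + 2)) • A₂ F₂)

/-- The rules of Definition 4.1 defining `A` on the faces of the ℓ∞-sum `H₁ ⊕∞ H₂` from the
families `A₁, A₂` for `H₁, H₂`. -/
def LInfRules (H₁ H₂ : Set (Euc n)) (A₁ A₂ A : Set (Euc n) → Set (Euc n)) : Prop :=
  (∀ F₁, IsFaceIn (Submodule.span ℝ H₁) H₁ F₁ → A (F₁ + H₂) = A₁ F₁) ∧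
  (∀ F₂, IsFaceIn (Submodule.span ℝ H₂) H₂ F₂ → A (H₁ + F₂) = A₂ F₂) ∧
  (∀ F₁ F₂, IsFaceIn (Submodule.span ℝ H₁) H₁ F₁ → IsFaceIn (Submodule.span ℝ H₂) H₂ F₂ →
      A (F₁ + F₂) = A₁ F₁ + A₂ F₂ +
        (Submodule.span ℝ
          {(((setDim H₁ : ℝ) - setDim F₁)⁻¹ • centroid F₁ -
            ((setDim H₂ : ℝ) - setDim F₂)⁻¹ • centroid F₂)} : Set (Euc n)))

/-- A Hanner polytope `H` together with its recursively defined family `A` of affine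
subspaces, paired with the (relative) polar Hanner polytope `H'` and its family `A'`. -/
inductive HannerRep :
    Set (Euc n) → (Set (Euc n) → Set (Euc n)) → Set (Euc n) → (Set (Euc n) → Set (Euc n)) → Prop
  | seg (x : Euc n) (hx : x ≠ 0) (A A' : Set (Euc n) → Set (Euc n))
      (hA1 : A {x} = {x}) (hA2 : A {-x} = {-x})
      (hA'1 : A' {(‖x‖ ^ 2)⁻¹ • x} = {(‖x‖ ^ 2)⁻¹ • x})
      (hA'2 : A' {-((‖x‖ ^ 2)⁻¹ • x)} = {-((‖x‖ ^ 2)⁻¹ • x)}) :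
      HannerRep (segment ℝ (-x) x) A
        (segment ℝ (-((‖x‖ ^ 2)⁻¹ • x)) ((‖x‖ ^ 2)⁻¹ • x)) A'
  | l1 {H₁ H₂ H₁' H₂' : Set (Euc n)} {A₁ A₂ A₁' A₂' A A' : Set (Euc n) → Set (Euc n)}
      (h₁ : HannerRep H₁ A₁ H₁' A₁') (h₂ : HannerRep H₂ A₂ H₂' A₂')
      (horth : Submodule.span ℝ (H₂ ∪ H₂') ≤ (Submodule.span ℝ (H₁ ∪ H₁'))ᗮ)
      (hA : L1Rules H₁ H₂ A₁ A₂ A) (hA' : LInfRules H₁' H₂' A₁' A₂' A') :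
      HannerRep (convexHull ℝ (H₁ ∪ H₂)) A (H₁' + H₂') A'
  | linf {H₁ H₂ H₁' H₂' : Set (Euc n)} {A₁ A₂ A₁' A₂' A A' : Set (Euc n) → Set (Euc n)}
      (h₁ : HannerRep H₁ A₁ H₁' A₁') (h₂ : HannerRep H₂ A₂ H₂' A₂')
      (horth : Submodule.span ℝ (H₂ ∪ H₂') ≤ (Submodule.span ℝ (H₁ ∪ H₁'))ᗮ)
      (hA : LInfRules H₁ H₂ A₁ A₂ A) (hA' : L1Rules H₁' H₂' A₁' A₂' A') :
      HannerRep (H₁ + H₂) A (convexHull ℝ (H₁' ∪ H₂')) A'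

/-- The standard symmetric segment `[-e_j, e_j]`. -/
def stdSeg (j : Fin n) : Set (Euc n) :=
  segment ℝ (-(EuclideanSpace.single j (1 : ℝ))) (EuclideanSpace.single j (1 : ℝ))

/-- A standard Hanner polytope `H` (built from the segments `[-e_j, e_j]`) together with its
recursively defined family `A` of affine subspaces, paired with the polar standard Hanner
polytope `H'` and its family `A'`. -/
inductive StdHannerRep :
    Set (Euc n) → (Set (Euc n) → Set (Euc n)) → Set (Euc n) → (Set (Euc n) → Set (Euc n)) → Prop
  | seg (j : Fin n) (A A' : Set (Euc n) → Set (Euc n))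
      (hA1 : A {EuclideanSpace.single j (1 : ℝ)} = {EuclideanSpace.single j (1 : ℝ)})
      (hA2 : A {-EuclideanSpace.single j (1 : ℝ)} = {-EuclideanSpace.single j (1 : ℝ)})
      (hA'1 : A' {EuclideanSpace.single j (1 : ℝ)} = {EuclideanSpace.single j (1 : ℝ)})
      (hA'2 : A' {-EuclideanSpace.single j (1 : ℝ)} = {-EuclideanSpace.single j (1 : ℝ)}) :
      StdHannerRep (stdSeg j) A (stdSeg j) A'
  | l1 {H₁ H₂ H₁' H₂' : Set (Euc n)} {A₁ A₂ A₁' A₂' A A' : Set (Euc n) → Set (Euc n)}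
      (h₁ : StdHannerRep H₁ A₁ H₁' A₁') (h₂ : StdHannerRep H₂ A₂ H₂' A₂')
      (hspan : Submodule.span ℝ (H₁ ∪ H₁') ⊓ Submodule.span ℝ (H₂ ∪ H₂') = ⊥)
      (hA : L1Rules H₁ H₂ A₁ A₂ A) (hA' : LInfRules H₁' H₂' A₁' A₂' A') :
      StdHannerRep (convexHull ℝ (H₁ ∪ H₂)) A (H₁' + H₂') A'
  | linf {H₁ H₂ H₁' H₂' : Set (Euc n)} {A₁ A₂ A₁' A₂' A A' : Set (Euc n) → Set (Euc n)}
      (h₁ : StdHannerRep H₁ A₁ H₁' A₁') (h₂ : StdHannerRep H₂ A₂ H₂' A₂')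
      (hspan : Submodule.span ℝ (H₁ ∪ H₁') ⊓ Submodule.span ℝ (H₂ ∪ H₂') = ⊥)
      (hA : LInfRules H₁ H₂ A₁ A₂ A) (hA' : L1Rules H₁' H₂' A₁' A₂' A') :
      StdHannerRep (H₁ + H₂) A (convexHull ℝ (H₁' ∪ H₂')) A'

/-- `H` is a standard Hanner polytope. -/
def IsStdHanner (H : Set (Euc n)) : Prop :=
  ∃ (A : Set (Euc n) → Set (Euc n)) (H' : Set (Euc n)) (A' : Set (Euc n) → Set (Euc n)),
    StdHannerRep H A H' A'

/-- The unit cube `B∞ⁿ = [-1,1]ⁿ`. -/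
def cube (n : ℕ) : Set (Euc n) := {x | ∀ i, |x i| ≤ 1}

/-- The unit cross-polytope `B₁ⁿ`. -/
def crossPolytope (n : ℕ) : Set (Euc n) := {x | ∑ i, |x i| ≤ 1}

/-- The coordinate subspace `ℝ^(v) = span{e_j : j ∈ supp v}`. -/
def suppSpan (v : Euc n) : Submodule ℝ (Euc n) :=
  Submodule.span ℝ {x : Euc n | ∃ j, v j ≠ 0 ∧ x = EuclideanSpace.single j (1 : ℝ)}

/-- Orthogonal projection of a set onto a subspace. -/
def projSet (V : Submodule ℝ (Euc n)) (K : Set (Euc n)) : Set (Euc n) :=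
  (fun x => (orthogonalProjection V x : Euc n)) '' K

end

noncomputable section AuxHanner
variable {n : ℕ}

namespace HannerAux

/-- The coordinate submodule of coordinates satisfying `P`. -/
def coordSub (P : Fin n → Prop) : Submodule ℝ (Euc n) where
  carrier := {x | ∀ j, ¬ P j → x j = 0}
  add_mem' := fun {a b} ha hb j hj => by
    have h : (a + b) j = a j + b j := rfl
    rw [h, ha j hj, hb j hj, add_zero]
  zero_mem' := fun j _ => rfl
  smul_mem' := fun c a ha j hj => by
    have h : (c • a) j = c * a j := rfl
    rw [h, ha j hj, mul_zero]

lemma mem_coordSub {P : Fin n → Prop} {x : Euc n} :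
    x ∈ coordSub P ↔ ∀ j, ¬ P j → x j = 0 := Iff.rfl

lemma coordSub_mono {P Q : Fin n → Prop} (h : ∀ j, P j → Q j) : coordSub P ≤ coordSub Q :=
  fun x hx j hj => hx j fun hp => hj (h j hp)

lemma single_mem_coordSub {P : Fin n → Prop} {j : Fin n} (hj : P j) :
    EuclideanSpace.single j (1 : ℝ) ∈ coordSub P := by
  intro k hk
  have : k ≠ j := fun h => hk (h ▸ hj)
  simp [EuclideanSpace.single_apply, this]

lemma sum_single_eq (x : Euc n) : x = ∑ j : Fin n, x j • EuclideanSpace.single j (1:ℝ) := by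
  have := (EuclideanSpace.basisFun (Fin n) ℝ).toBasis.sum_repr x
  simp only [OrthonormalBasis.coe_toBasis_repr_apply, EuclideanSpace.basisFun_repr,
    OrthonormalBasis.coe_toBasis, EuclideanSpace.basisFun_apply] at this
  exact this.symm

lemma spanSingles_eq (P : Fin n → Prop) :
    Submodule.span ℝ {x : Euc n | ∃ j, P j ∧ x = EuclideanSpace.single j (1:ℝ)} = coordSub P := by
  apply le_antisymm
  · rw [Submodule.span_le]
    rintro x ⟨j, hPj, rfl⟩
    exact single_mem_coordSub hPj
  · intro x hx
    rw [sum_single_eq x]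
    refine Submodule.sum_mem _ fun j _ => ?_
    by_cases hj : P j
    · exact Submodule.smul_mem _ _ (Submodule.subset_span ⟨j, hj, rfl⟩)
    · rw [hx j hj, zero_smul]
      exact Submodule.zero_mem _

lemma suppSpan_eq (v : Euc n) : suppSpan v = coordSub (fun j => v j ≠ 0) :=
  spanSingles_eq _

lemma self_mem_suppSpan (v : Euc n) : v ∈ suppSpan v := by
  rw [suppSpan_eq]
  exact fun j hj => not_not.1 hj

lemma coordSub_le_orthogonal {P Q : Fin n → Prop} (h : ∀ j, P j → Q j → False) :
    coordSub P ≤ (coordSub Q)ᗮ := by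
  intro x hx
  rw [Submodule.mem_orthogonal]
  intro y hy
  rw [PiLp.inner_apply]
  refine Finset.sum_eq_zero fun j _ => ?_
  by_cases hj : P j
  · rw [hy j fun hq => h j hj hq]
    simp
  · rw [hx j hj]
    simp

lemma coordSub_orthogonal (Q : Fin n → Prop) :
    (coordSub (n := n) Q)ᗮ = coordSub (fun j => ¬ Q j) := by
  apply le_antisymm
  · intro y hy j hj
    have hQj : Q j := not_not.1 hj
    have h1 := (Submodule.mem_orthogonal _ _).1 hy _ (single_mem_coordSub hQj)
    simpa [EuclideanSpace.inner_single_left] using h1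
  · exact coordSub_le_orthogonal fun j hp hq => hp hq

lemma coordSub_pred_disjoint {P Q : Fin n → Prop}
    (h : coordSub (n := n) P ⊓ coordSub Q = ⊥) {j : Fin n} (hP : P j) (hQ : Q j) : False := by
  have hmem : EuclideanSpace.single j (1:ℝ) ∈ coordSub (n := n) P ⊓ coordSub Q :=
    ⟨single_mem_coordSub hP, single_mem_coordSub hQ⟩
  rw [h, Submodule.mem_bot] at hmem
  have := congrArg (fun z : Euc n => z j) hmem
  simp at this

lemma coordSub_sup (P Q : Fin n → Prop) :
    coordSub (n := n) P ⊔ coordSub Q = coordSub (fun j => P j ∨ Q j) := by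
  apply le_antisymm
  · exact sup_le (coordSub_mono fun j h => Or.inl h) (coordSub_mono fun j h => Or.inr h)
  · intro x hx
    classical
    rw [Submodule.mem_sup]
    have hx1 : ∃ x1 : Euc n, ∀ j, x1 j = if P j then x j else 0 :=
      ⟨WithLp.toLp 2 (fun j => if P j then x j else 0 : ∀ _ : Fin n, ℝ), fun j => rfl⟩
    obtain ⟨x1, hx1⟩ := hx1
    refine ⟨x1, fun j hj => by rw [hx1 j]; simp [hj], x - x1, fun j hj => ?_, by abel⟩
    have hxj : (x - x1) j = x j - x1 j := rfl
    rw [hxj, hx1 j]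
    by_cases hPj : P j
    · simp [hPj]
    · have : x j = 0 := hx j (by tauto)
      simp [hPj, this]

/-- Key linear-algebra fact: if `A = X + Y` with `X ⊆ V` and `Y ⊆ Vᗮ`, `0 ∈ Y`, then
the section of `A` by `V` coincides with the orthogonal projection of `A` to `V`. -/
lemma sect_eq_proj {V : Submodule ℝ (Euc n)} {A X Y : Set (Euc n)}
    (hA : A = X + Y) (hX : X ⊆ (V : Set (Euc n))) (hY0 : (0:Euc n) ∈ Y)
    (hY : Y ⊆ ((Vᗮ : Submodule ℝ (Euc n)) : Set (Euc n))) :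
    A ∩ (V : Set (Euc n)) = projSet V A := by
  have h1 : A ∩ (V : Set (Euc n)) = X := by
    apply Set.Subset.antisymm
    · rintro z ⟨hzA, hzV⟩
      rw [hA] at hzA
      obtain ⟨x, hx, y, hy, rfl⟩ := hzA
      have hyV : y ∈ V := by
        have : y = (x + y) - x := by abel
        rw [this]
        exact Submodule.sub_mem _ hzV (hX hx)
      have hy0 : y = 0 := by
        have := (Submodule.mem_orthogonal _ _).1 (hY hy) y hyV
        exact inner_self_eq_zero.1 this
      simpa [hy0] using hx
    · intro x hx
      exact ⟨by rw [hA]; exact ⟨x, hx, 0, hY0, add_zero x⟩, hX hx⟩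
  have h2 : projSet V A = X := by
    apply Set.Subset.antisymm
    · rintro _ ⟨z, hz, rfl⟩
      rw [hA] at hz
      obtain ⟨x, hx, y, hy, rfl⟩ := hz
      have hpx : (orthogonalProjection V x : Euc n) = x :=
        Submodule.starProjection_eq_self_iff.2 (hX hx)
      have hpy : (orthogonalProjection V y : Euc n) = 0 := by
        have := Submodule.orthogonalProjectionOnto_apply_of_mem_orthogonal (K := V) (hY hy)
        simpa using congrArg (Subtype.val) this
      have : (orthogonalProjection V (x + y) : Euc n) = x := by
        rw [map_add]
        push_cast
        rw [hpx, hpy, add_zero]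
      show (↑(orthogonalProjection V (x + y)) : Euc n) ∈ X
      rw [this]; exact hx
    · intro x hx
      refine ⟨x, by rw [hA]; exact ⟨x, hx, 0, hY0, add_zero x⟩, ?_⟩
      exact Submodule.starProjection_eq_self_iff.2 (hX hx)
  rw [h1, h2]


lemma setDim_singleton (v : Euc n) : setDim ({v} : Set (Euc n)) = 0 := by
  rw [setDim]
  have h : ({v} : Set (Euc n)) - {v} = {0} := by simp
  rw [h, Submodule.span_zero_singleton]
  exact finrank_bot ℝ _

lemma centroid_singleton (v : Euc n) : centroid ({v} : Set (Euc n)) = v := by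
  rw [centroid, setDim_singleton]
  push_cast
  rw [Measure.restrict_singleton, Measure.hausdorffMeasure_zero_singleton, one_smul,
    integral_dirac]
  simp

/-- Restrict a supporting hyperplane of a sum to one of the summands. -/
lemma face_restrict {H1 : Set (Euc n)} (hsym : H1 = -H1) (hne : ∃ x ∈ H1, x ≠ 0)
    {u : Euc n} {b : ℝ} {v : Euc n} (hvH : v ∈ H1) (hvb : ⟪v, u⟫ = b)
    (hub : ∀ x ∈ H1, ⟪x, u⟫ ≤ b)
    (hface : ∀ x ∈ H1, ⟪x, u⟫ = b → x = v) :
    IsFaceIn (Submodule.span ℝ H1) H1 {v} := by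
  classical
  set u₁ : Euc n := (orthogonalProjection (Submodule.span ℝ H1) u : Euc n) with hu₁
  have hinner : ∀ x ∈ H1, ⟪x, u₁⟫ = ⟪x, u⟫ := by
    intro x hx
    have hx' : x ∈ Submodule.span ℝ H1 := Submodule.subset_span hx
    have horth : u - u₁ ∈ (Submodule.span ℝ H1)ᗮ :=
      Submodule.sub_starProjection_mem_orthogonal u
    have h0 := (Submodule.mem_orthogonal _ _).1 horth x hx'
    have h2 : ⟪x, u⟫ - ⟪x, u₁⟫ = 0 := by rwa [← inner_sub_right]
    linarith
  have hnotsub : ¬ H1 ⊆ {v} := by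
    intro hsub
    obtain ⟨x, hxH, hx0⟩ := hne
    have hxv : x = v := hsub hxH
    have hnx : -x ∈ -H1 := Set.neg_mem_neg.2 hxH
    rw [← hsym] at hnx
    have hnxv : -x = v := hsub hnx
    have hxx : -x = x := hnxv.trans hxv.symm
    have : x + x = 0 := by have h0 := neg_add_cancel x; rwa [hxx] at h0
    have h2 : (2:ℝ) • x = 0 := by rw [two_smul]; exact this
    rcases smul_eq_zero.1 h2 with h | h
    · norm_num at h
    · exact hx0 h
  have hu₁ne : u₁ ≠ 0 := by
    intro h0
    have hall : ∀ x ∈ H1, ⟪x, u⟫ = 0 := fun x hx => by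
      rw [← hinner x hx, h0, inner_zero_right]
    have hb0 : b = 0 := by rw [← hvb]; exact hall v hvH
    exact hnotsub fun x hx => (hface x hx (by rw [hall x hx, hb0]) : x = v)
  refine ⟨u₁, b, Submodule.coe_mem _, hu₁ne, fun x hx => (hinner x hx).symm ▸ hub x hx,
    ⟨v, hvH, by rw [hinner v hvH, hvb]⟩, ?_, ?_⟩
  · ext x
    simp only [Set.mem_singleton_iff, Set.mem_setOf_eq]
    constructor
    · rintro rfl
      exact ⟨hvH, by rw [hinner x hvH, hvb]⟩
    · rintro ⟨hxH, hxb⟩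
      exact hface x hxH (by rw [← hinner x hxH, hxb])
  · intro h
    exact hnotsub (h ▸ Set.Subset.rfl)

/-- The inductive invariant carried through the construction of a standard Hanner polytope. -/
def Good (H : Set (Euc n)) (A : Set (Euc n) → Set (Euc n)) (P : Fin n → Prop) : Prop :=
  (∃ S : Set (Euc n), S.Finite ∧ H = convexHull ℝ S) ∧ H = -H ∧ (∃ x ∈ H, x ≠ 0) ∧
  (0 : Euc n) ∈ H ∧ Submodule.span ℝ H = coordSub P ∧
  ∀ v : Euc n, IsFaceIn (Submodule.span ℝ H) H {v} → ∃ X Y : Set (Euc n),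
    A {v} = X + Y ∧ X ⊆ (suppSpan v : Set (Euc n)) ∧ (0 : Euc n) ∈ Y ∧
    Y ⊆ (coordSub (fun j => P j ∧ v j = 0) : Set (Euc n))


lemma mem_stdSeg {j : Fin n} {x : Euc n} :
    x ∈ stdSeg j ↔ ∃ t : ℝ, -1 ≤ t ∧ t ≤ 1 ∧ x = t • EuclideanSpace.single j (1:ℝ) := by
  constructor
  · rintro ⟨a, b, ha, hb, hab, rfl⟩
    refine ⟨b - a, by linarith, by linarith, ?_⟩
    module
  · rintro ⟨t, h1, h2, rfl⟩
    refine ⟨(1 - t) / 2, (1 + t) / 2, by linarith, by linarith, by ring, ?_⟩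
    module

lemma good_seg (j : Fin n) (A : Set (Euc n) → Set (Euc n))
    (hA1 : A {EuclideanSpace.single j (1 : ℝ)} = {EuclideanSpace.single j (1 : ℝ)})
    (hA2 : A {-EuclideanSpace.single j (1 : ℝ)} = {-EuclideanSpace.single j (1 : ℝ)}) :
    Good (stdSeg j) A (fun k => k = j) := by
  classical
  set e : Euc n := EuclideanSpace.single j (1:ℝ) with he
  have hej : e j = 1 := by simp [he]
  have hene : e ≠ 0 := fun h => by
    have := congrArg (fun z : Euc n => z j) h
    simp [hej] at this
  have heMem : e ∈ stdSeg j := mem_stdSeg.2 ⟨1, by norm_num, by norm_num, (one_smul ℝ e).symm⟩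
  have hneMem : -e ∈ stdSeg j := mem_stdSeg.2 ⟨-1, by norm_num, by norm_num, by
    rw [neg_smul, one_smul]⟩
  refine ⟨⟨{-e, e}, (Set.finite_singleton _).insert _, (convexHull_pair _ _).symm⟩, ?_, ?_, ?_, ?_, ?_⟩
  · ext x
    rw [Set.mem_neg, mem_stdSeg, mem_stdSeg]
    constructor
    · rintro ⟨t, h1, h2, hx⟩
      exact ⟨-t, by linarith, by linarith, by rw [neg_smul, hx]⟩
    · rintro ⟨t, h1, h2, hx⟩
      exact ⟨-t, by linarith, by linarith, by rw [neg_smul, ← hx, neg_neg]⟩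
  · exact ⟨e, heMem, hene⟩
  · exact mem_stdSeg.2 ⟨0, by norm_num, by norm_num, by rw [zero_smul]⟩
  · apply le_antisymm
    · rw [Submodule.span_le]
      intro x hx
      obtain ⟨t, _, _, rfl⟩ := mem_stdSeg.1 hx
      exact Submodule.smul_mem _ t (single_mem_coordSub rfl)
    · rw [← spanSingles_eq]
      rw [Submodule.span_le]
      rintro x ⟨k, rfl, rfl⟩
      exact Submodule.subset_span heMem
  · rintro v ⟨u, b, huV, hu0, hub, -, hFeq, -⟩
    have hspan : Submodule.span ℝ (stdSeg j) = coordSub (fun k => k = j) := by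
      apply le_antisymm
      · rw [Submodule.span_le]
        intro x hx
        obtain ⟨t, _, _, rfl⟩ := mem_stdSeg.1 hx
        exact Submodule.smul_mem _ t (single_mem_coordSub rfl)
      · rw [← spanSingles_eq, Submodule.span_le]
        rintro x ⟨k, rfl, rfl⟩
        exact Submodule.subset_span heMem
    rw [hspan] at huV
    have hu : u = u j • e := by
      have hx1 : ∀ k, u k = (u j • e) k := by
        intro k
        by_cases hk : k = j
        · subst hk; simp [he]
        · rw [huV k hk]
          simp [he, EuclideanSpace.single_apply, hk]
      ext k; exact hx1 k
    set c : ℝ := u j with hc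
    have hcne : c ≠ 0 := by
      intro h
      exact hu0 (by rw [hu, h, zero_smul])
    have hinner : ∀ x : Euc n, ⟪x, u⟫ = c * x j := by
      intro x
      rw [hu, real_inner_smul_right, he]
      congr 1
      simp [EuclideanSpace.inner_single_right]
    have hvmem : v ∈ {x ∈ stdSeg j | ⟪x, u⟫ = b} := hFeq ▸ rfl
    obtain ⟨hvS, hvb⟩ := hvmem
    obtain ⟨tv, htv1, htv2, hveq⟩ := mem_stdSeg.1 hvS
    have hvj : ⟪v, u⟫ = c * tv := by
      rw [hinner, hveq]; simp [he]
    rcases lt_or_gt_of_ne hcne with hneg | hpos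
    · -- c < 0 : v = -e
      have h1 : ⟪-e, u⟫ ≤ b := hub _ hneMem
      have h2 : ⟪-e, u⟫ = -c := by rw [hinner]; simp [hej]
      have h3 : b ≤ -c := by
        rw [← hvb, hvj]; nlinarith
      have hmem : -e ∈ {x ∈ stdSeg j | ⟪x, u⟫ = b} := ⟨hneMem, by rw [h2]; linarith⟩
      rw [← hFeq] at hmem
      have hv : v = -e := (Set.mem_singleton_iff.1 hmem).symm
      rw [hv]
      refine ⟨{-e}, {0}, by rw [hA2, Set.singleton_add_singleton, add_zero], ?_,
        rfl, Set.singleton_subset_iff.2 (Submodule.zero_mem _)⟩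
      exact Set.singleton_subset_iff.2 (self_mem_suppSpan _)
    · -- c > 0 : v = e
      have h1 : ⟪e, u⟫ ≤ b := hub _ heMem
      have h2 : ⟪e, u⟫ = c := by rw [hinner, hej, mul_one]
      have h3 : b ≤ c := by
        rw [← hvb, hvj]; nlinarith
      have hmem : e ∈ {x ∈ stdSeg j | ⟪x, u⟫ = b} := ⟨heMem, by rw [h2]; linarith⟩
      rw [← hFeq] at hmem
      have hv : v = e := (Set.mem_singleton_iff.1 hmem).symm
      rw [hv]
      refine ⟨{e}, {0}, by rw [hA1, Set.singleton_add_singleton, add_zero], ?_,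
        rfl, Set.singleton_subset_iff.2 (Submodule.zero_mem _)⟩
      exact Set.singleton_subset_iff.2 (self_mem_suppSpan _)


lemma symm_mem {H : Set (Euc n)} (hsym : H = -H) {x : Euc n} (hx : x ∈ H) : -x ∈ H := by
  have : -x ∈ -H := Set.neg_mem_neg.2 hx
  rwa [← hsym] at this

lemma inner_isLinearMap (u : Euc n) : IsLinearMap ℝ (fun z : Euc n => ⟪z, u⟫) :=
  ⟨fun a b => inner_add_left a b u, fun r a => real_inner_smul_left a u r⟩

lemma good_l1 {H₁ H₂ : Set (Euc n)} {A₁ A₂ A : Set (Euc n) → Set (Euc n)}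
    {P₁ P₂ : Fin n → Prop} (g₁ : Good H₁ A₁ P₁) (g₂ : Good H₂ A₂ P₂)
    (hd : ∀ j, P₁ j → P₂ j → False) (hA : L1Rules H₁ H₂ A₁ A₂ A) :
    Good (convexHull ℝ (H₁ ∪ H₂)) A (fun j => P₁ j ∨ P₂ j) := by
  obtain ⟨⟨S₁, hS₁f, hS₁⟩, hsym₁, hne₁, h0₁, hsp₁, hvert₁⟩ := g₁
  obtain ⟨⟨S₂, hS₂f, hS₂⟩, hsym₂, hne₂, h0₂, hsp₂, hvert₂⟩ := g₂
  have hsubtot : H₁ ∪ H₂ ⊆ convexHull ℝ (H₁ ∪ H₂) := subset_convexHull ℝ _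
  have hUnionNeg : -(H₁ ∪ H₂) = H₁ ∪ H₂ := by
    ext x
    rw [Set.mem_neg]
    constructor
    · rintro (h | h)
      · exact Or.inl (by simpa using symm_mem hsym₁ h)
      · exact Or.inr (by simpa using symm_mem hsym₂ h)
    · rintro (h | h)
      · exact Or.inl (symm_mem hsym₁ h)
      · exact Or.inr (symm_mem hsym₂ h)
  refine ⟨⟨S₁ ∪ S₂, hS₁f.union hS₂f, by
      rw [hS₁, hS₂, convexHull_convexHull_union_left, convexHull_convexHull_union_right]⟩,
    by rw [← convexHull_neg, hUnionNeg], ?_, ?_, ?_, ?_⟩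
  · obtain ⟨x, hx, hx0⟩ := hne₁
    exact ⟨x, hsubtot (Or.inl hx), hx0⟩
  · exact hsubtot (Or.inl h0₁)
  · have h1 : Submodule.span ℝ (convexHull ℝ (H₁ ∪ H₂)) = Submodule.span ℝ (H₁ ∪ H₂) := by
      apply le_antisymm
      · rw [Submodule.span_le]
        exact convexHull_min Submodule.subset_span (Submodule.span ℝ (H₁ ∪ H₂)).convex
      · exact Submodule.span_mono (subset_convexHull ℝ _)
    rw [h1, Submodule.span_union, hsp₁, hsp₂, coordSub_sup]
  · rintro v ⟨u, b, -, hu0, hub, ⟨w, hwH, hwb⟩, hFeq, -⟩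
    have hvface : v ∈ convexHull ℝ (H₁ ∪ H₂) ∧ ⟪v, u⟫ = b := by
      have : v ∈ {x ∈ convexHull ℝ (H₁ ∪ H₂) | ⟪x, u⟫ = b} := by rw [← hFeq]; rfl
      exact this
    have hattain : ∃ y ∈ H₁ ∪ H₂, ⟪y, u⟫ = b := by
      by_contra hcon
      push_neg at hcon
      have hlt : ∀ y ∈ H₁ ∪ H₂, y ∈ {z : Euc n | ⟪z, u⟫ < b} := fun y hy =>
        lt_of_le_of_ne (hub y (hsubtot hy)) (hcon y hy)
      have hconv : convexHull ℝ (H₁ ∪ H₂) ⊆ {z : Euc n | ⟪z, u⟫ < b} :=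
        convexHull_min hlt (convex_halfSpace_lt (inner_isLinearMap u) b)
      exact absurd hwb (ne_of_lt (hconv hwH))
    obtain ⟨y, hyU, hyb⟩ := hattain
    have hyv : y = v := by
      have hmem : y ∈ {x ∈ convexHull ℝ (H₁ ∪ H₂) | ⟪x, u⟫ = b} := ⟨hsubtot hyU, hyb⟩
      rw [← hFeq] at hmem
      exact hmem
    subst hyv
    rcases hyU with hv1 | hv2
    · -- v is a vertex of H₁
      have hface1 : ∀ x ∈ H₁, ⟪x, u⟫ = b → x = y := fun x hx hxb => by
        have hmem : x ∈ {x ∈ convexHull ℝ (H₁ ∪ H₂) | ⟪x, u⟫ = b} := ⟨hsubtot (Or.inl hx), hxb⟩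
        rw [← hFeq] at hmem
        exact hmem
      have hf1 : IsFaceIn (Submodule.span ℝ H₁) H₁ {y} :=
        face_restrict hsym₁ hne₁ hv1 hyb (fun x hx => hub x (hsubtot (Or.inl hx))) hface1
      obtain ⟨X, Y, hAeq, hX, hY0, hY⟩ := hvert₁ y hf1
      have hrule := hA.1 {y} hf1
      refine ⟨X, Y + (Submodule.span ℝ H₂ : Set (Euc n)),
        by rw [hrule, hAeq, add_assoc], hX,
        ⟨0, hY0, 0, Submodule.zero_mem _, add_zero 0⟩, ?_⟩
      rintro z ⟨y1, hy1, y2, hy2, rfl⟩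
      refine Submodule.add_mem _ ?_ ?_
      · exact coordSub_mono (fun j hj => ⟨Or.inl hj.1, hj.2⟩) (hY hy1)
      · have hy2' : y2 ∈ coordSub P₂ := by rw [← hsp₂]; exact hy2
        refine coordSub_mono (fun j hj => ⟨Or.inr hj, ?_⟩) hy2'
        have hv' : y ∈ coordSub P₁ := by rw [← hsp₁]; exact Submodule.subset_span hv1
        exact hv' j fun hp => hd j hp hj
    · -- v is a vertex of H₂
      have hface2 : ∀ x ∈ H₂, ⟪x, u⟫ = b → x = y := fun x hx hxb => by
        have hmem : x ∈ {x ∈ convexHull ℝ (H₁ ∪ H₂) | ⟪x, u⟫ = b} := ⟨hsubtot (Or.inr hx), hxb⟩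
        rw [← hFeq] at hmem
        exact hmem
      have hf2 : IsFaceIn (Submodule.span ℝ H₂) H₂ {y} :=
        face_restrict hsym₂ hne₂ hv2 hyb (fun x hx => hub x (hsubtot (Or.inr hx))) hface2
      obtain ⟨X, Y, hAeq, hX, hY0, hY⟩ := hvert₂ y hf2
      have hrule := hA.2.1 {y} hf2
      refine ⟨X, Y + (Submodule.span ℝ H₁ : Set (Euc n)),
        by rw [hrule, hAeq]; abel, hX,
        ⟨0, hY0, 0, Submodule.zero_mem _, add_zero 0⟩, ?_⟩
      rintro z ⟨y1, hy1, y2, hy2, rfl⟩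
      refine Submodule.add_mem _ ?_ ?_
      · exact coordSub_mono (fun j hj => ⟨Or.inr hj.1, hj.2⟩) (hY hy1)
      · have hy2' : y2 ∈ coordSub P₁ := by rw [← hsp₁]; exact hy2
        refine coordSub_mono (fun j hj => ⟨Or.inl hj, ?_⟩) hy2'
        have hv' : y ∈ coordSub P₂ := by rw [← hsp₂]; exact Submodule.subset_span hv2
        exact hv' j fun hp => hd j hj hp


lemma good_linf {H₁ H₂ : Set (Euc n)} {A₁ A₂ A : Set (Euc n) → Set (Euc n)}
    {P₁ P₂ : Fin n → Prop} (g₁ : Good H₁ A₁ P₁) (g₂ : Good H₂ A₂ P₂)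
    (hd : ∀ j, P₁ j → P₂ j → False) (hA : LInfRules H₁ H₂ A₁ A₂ A) :
    Good (H₁ + H₂) A (fun j => P₁ j ∨ P₂ j) := by
  obtain ⟨⟨S₁, hS₁f, hS₁⟩, hsym₁, hne₁, h0₁, hsp₁, hvert₁⟩ := g₁
  obtain ⟨⟨S₂, hS₂f, hS₂⟩, hsym₂, hne₂, h0₂, hsp₂, hvert₂⟩ := g₂
  have hsub1 : H₁ ⊆ H₁ + H₂ := fun x hx => ⟨x, hx, 0, h0₂, add_zero x⟩
  have hsub2 : H₂ ⊆ H₁ + H₂ := fun x hx => ⟨0, h0₁, x, hx, zero_add x⟩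
  have hspan : Submodule.span ℝ (H₁ + H₂) = coordSub (fun j => P₁ j ∨ P₂ j) := by
    apply le_antisymm
    · rw [Submodule.span_le]
      rintro z ⟨a, ha, b, hb, rfl⟩
      have ha' : a ∈ coordSub P₁ := by rw [← hsp₁]; exact Submodule.subset_span ha
      have hb' : b ∈ coordSub P₂ := by rw [← hsp₂]; exact Submodule.subset_span hb
      exact Submodule.add_mem _ (coordSub_mono (fun j => Or.inl) ha')
        (coordSub_mono (fun j => Or.inr) hb')
    · rw [← coordSub_sup, ← hsp₁, ← hsp₂]
      exact sup_le (Submodule.span_mono hsub1) (Submodule.span_mono hsub2)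
  refine ⟨⟨S₁ + S₂, hS₁f.add hS₂f, by rw [hS₁, hS₂, ← convexHull_add]⟩, ?_, ?_, hsub1 h0₁, hspan, ?_⟩
  · ext x
    rw [Set.mem_neg]
    constructor
    · rintro ⟨a, ha, b, hb, hab⟩
      refine ⟨-a, symm_mem hsym₁ ha, -b, symm_mem hsym₂ hb, ?_⟩
      rw [← hab]; beta_reduce; abel
    · rintro ⟨a, ha, b, hb, hab⟩
      refine ⟨-a, symm_mem hsym₁ ha, -b, symm_mem hsym₂ hb, ?_⟩
      have : a + b = -x := hab
      rw [← neg_neg x, ← this]; abel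
  · obtain ⟨x, hx, hx0⟩ := hne₁
    exact ⟨x, hsub1 hx, hx0⟩
  · rintro v ⟨u, b, -, hu0, hub, ⟨w, hwH, hwb⟩, hFeq, -⟩
    have hC₁ : IsCompact H₁ := by rw [hS₁]; exact hS₁f.isCompact_convexHull ℝ
    have hC₂ : IsCompact H₂ := by rw [hS₂]; exact hS₂f.isCompact_convexHull ℝ
    obtain ⟨m₁, hm₁, hmax₁⟩ := hC₁.exists_isMaxOn (f := fun y : Euc n => ⟪y, u⟫) ⟨0, h0₁⟩
      ((continuous_id.inner continuous_const).continuousOn)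
    obtain ⟨m₂, hm₂, hmax₂⟩ := hC₂.exists_isMaxOn (f := fun y : Euc n => ⟪y, u⟫) ⟨0, h0₂⟩
      ((continuous_id.inner continuous_const).continuousOn)
    have hble : b ≤ ⟪m₁, u⟫ + ⟪m₂, u⟫ := by
      obtain ⟨a, ha, b', hb', hab⟩ := hwH
      calc b = ⟪w, u⟫ := hwb.symm
        _ = ⟪a, u⟫ + ⟪b', u⟫ := by rw [← hab, inner_add_left]
        _ ≤ ⟪m₁, u⟫ + ⟪m₂, u⟫ := add_le_add (hmax₁ ha) (hmax₂ hb')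
    have hm12 : m₁ + m₂ ∈ H₁ + H₂ := ⟨m₁, hm₁, m₂, hm₂, rfl⟩
    have hbge : ⟪m₁, u⟫ + ⟪m₂, u⟫ ≤ b := by
      have h := hub _ hm12
      rwa [inner_add_left] at h
    have hb : b = ⟪m₁, u⟫ + ⟪m₂, u⟫ := le_antisymm hble hbge
    have hvm : m₁ + m₂ = v := by
      have hmem : m₁ + m₂ ∈ {x ∈ H₁ + H₂ | ⟪x, u⟫ = b} := ⟨hm12, by rw [inner_add_left, hb]⟩
      rw [← hFeq] at hmem
      exact hmem
    have hface₁ : ∀ x ∈ H₁, ⟪x, u⟫ = ⟪m₁, u⟫ → x = m₁ := by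
      intro x hx hxb
      have hmem : x + m₂ ∈ {z ∈ H₁ + H₂ | ⟪z, u⟫ = b} :=
        ⟨⟨x, hx, m₂, hm₂, rfl⟩, by rw [inner_add_left, hxb, hb]⟩
      rw [← hFeq] at hmem
      have hxe : x + m₂ = m₁ + m₂ := hmem.trans hvm.symm
      exact add_right_cancel hxe
    have hface₂ : ∀ x ∈ H₂, ⟪x, u⟫ = ⟪m₂, u⟫ → x = m₂ := by
      intro x hx hxb
      have hmem : m₁ + x ∈ {z ∈ H₁ + H₂ | ⟪z, u⟫ = b} :=
        ⟨⟨m₁, hm₁, x, hx, rfl⟩, by rw [inner_add_left, hxb, hb]⟩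
      rw [← hFeq] at hmem
      have hxe : m₁ + x = m₁ + m₂ := hmem.trans hvm.symm
      exact add_left_cancel hxe
    have hf₁ : IsFaceIn (Submodule.span ℝ H₁) H₁ {m₁} :=
      face_restrict hsym₁ hne₁ hm₁ rfl (fun x hx => hmax₁ hx) hface₁
    have hf₂ : IsFaceIn (Submodule.span ℝ H₂) H₂ {m₂} :=
      face_restrict hsym₂ hne₂ hm₂ rfl (fun x hx => hmax₂ hx) hface₂
    obtain ⟨X₁, Y₁, hAeq₁, hX₁, hY₁0, hY₁⟩ := hvert₁ m₁ hf₁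
    obtain ⟨X₂, Y₂, hAeq₂, hX₂, hY₂0, hY₂⟩ := hvert₂ m₂ hf₂
    have hrule := hA.2.2 {m₁} {m₂} hf₁ hf₂
    simp only [centroid_singleton] at hrule
    have hvset : ({m₁} + {m₂} : Set (Euc n)) = {v} := by
      rw [Set.singleton_add_singleton, hvm]
    -- coordinate facts
    have hm₁P : m₁ ∈ coordSub P₁ := by rw [← hsp₁]; exact Submodule.subset_span hm₁
    have hm₂P : m₂ ∈ coordSub P₂ := by rw [← hsp₂]; exact Submodule.subset_span hm₂
    have hvadd : ∀ j, v j = m₁ j + m₂ j := fun j => by rw [← hvm]; rfl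
    have hsupp1 : ∀ j : Fin n, m₁ j ≠ 0 → v j ≠ 0 := by
      intro j hj
      have hP₁j : P₁ j := by
        by_contra hP
        exact hj (hm₁P j hP)
      have hm₂j : m₂ j = 0 := hm₂P j fun hq => hd j hP₁j hq
      rw [hvadd j, hm₂j, add_zero]
      exact hj
    have hsupp2 : ∀ j : Fin n, m₂ j ≠ 0 → v j ≠ 0 := by
      intro j hj
      have hP₂j : P₂ j := by
        by_contra hP
        exact hj (hm₂P j hP)
      have hm₁j : m₁ j = 0 := hm₁P j fun hq => hd j hq hP₂j
      rw [hvadd j, hm₁j, zero_add]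
      exact hj
    have hm₁v : m₁ ∈ suppSpan v := by
      rw [suppSpan_eq]
      intro j hj
      by_contra hc
      exact hj (hsupp1 j hc)
    have hm₂v : m₂ ∈ suppSpan v := by
      rw [suppSpan_eq]
      intro j hj
      by_contra hc
      exact hj (hsupp2 j hc)
    have hsupple1 : suppSpan m₁ ≤ suppSpan v := by
      rw [suppSpan_eq, suppSpan_eq]
      exact coordSub_mono hsupp1
    have hsupple2 : suppSpan m₂ ≤ suppSpan v := by
      rw [suppSpan_eq, suppSpan_eq]
      exact coordSub_mono hsupp2
    set w₀ : Euc n := ((setDim H₁ : ℝ) - (setDim ({m₁} : Set (Euc n)) : ℝ))⁻¹ • m₁ -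
        ((setDim H₂ : ℝ) - (setDim ({m₂} : Set (Euc n)) : ℝ))⁻¹ • m₂ with hw₀
    have hw₀mem : w₀ ∈ suppSpan v :=
      Submodule.sub_mem _ (Submodule.smul_mem _ _ hm₁v) (Submodule.smul_mem _ _ hm₂v)
    refine ⟨X₁ + X₂ + (Submodule.span ℝ {w₀} : Set (Euc n)), Y₁ + Y₂, ?_, ?_,
      ⟨0, hY₁0, 0, hY₂0, add_zero 0⟩, ?_⟩
    · rw [← hvset, hrule, hAeq₁, hAeq₂]
      abel
    · rintro z ⟨z', ⟨x₁, hx₁, x₂, hx₂, rfl⟩, w', hw', rfl⟩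
      refine Submodule.add_mem _ (Submodule.add_mem _ ?_ ?_) ?_
      · exact hsupple1 (hX₁ hx₁)
      · exact hsupple2 (hX₂ hx₂)
      · exact Submodule.span_le.2 (Set.singleton_subset_iff.2 hw₀mem) hw'
    · rintro z ⟨y₁, hy₁, y₂, hy₂, rfl⟩
      refine Submodule.add_mem _ ?_ ?_
      · refine coordSub_mono (fun j hj => ⟨Or.inl hj.1, ?_⟩) (hY₁ hy₁)
        have hm₂j : m₂ j = 0 := hm₂P j fun hq => hd j hj.1 hq
        rw [hvadd j, hj.2, hm₂j, add_zero]
      · refine coordSub_mono (fun j hj => ⟨Or.inr hj.1, ?_⟩) (hY₂ hy₂)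
        have hm₁j : m₁ j = 0 := hm₁P j fun hq => hd j hq hj.1
        rw [hvadd j, hj.2, hm₁j, add_zero]

lemma good_of_rep {H H' : Set (Euc n)} {A A' : Set (Euc n) → Set (Euc n)}
    (hH : StdHannerRep H A H' A') :
    (∃ P, Good H A P) ∧ (∃ P, Good H' A' P) := by
  induction hH with
  | seg j A A' hA1 hA2 hA'1 hA'2 =>
    exact ⟨⟨fun k => k = j, good_seg j A hA1 hA2⟩,
      ⟨fun k => k = j, good_seg j A' hA'1 hA'2⟩⟩
  | l1 h₁ h₂ hsp hA hA' ih₁ ih₂ =>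
    obtain ⟨⟨P₁, g₁⟩, ⟨P₁', g₁'⟩⟩ := ih₁
    obtain ⟨⟨P₂, g₂⟩, ⟨P₂', g₂'⟩⟩ := ih₂
    have hinf : coordSub P₁ ⊓ coordSub P₂ = ⊥ := by
      rw [← g₁.2.2.2.2.1, ← g₂.2.2.2.2.1]
      exact le_bot_iff.1 (le_trans (inf_le_inf
        (Submodule.span_mono Set.subset_union_left)
        (Submodule.span_mono Set.subset_union_left)) (le_of_eq hsp))
    have hinf' : coordSub P₁' ⊓ coordSub P₂' = ⊥ := by
      rw [← g₁'.2.2.2.2.1, ← g₂'.2.2.2.2.1]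
      exact le_bot_iff.1 (le_trans (inf_le_inf
        (Submodule.span_mono Set.subset_union_right)
        (Submodule.span_mono Set.subset_union_right)) (le_of_eq hsp))
    exact ⟨⟨fun j => P₁ j ∨ P₂ j,
        good_l1 g₁ g₂ (fun j h1 h2 => coordSub_pred_disjoint hinf h1 h2) hA⟩,
      ⟨fun j => P₁' j ∨ P₂' j,
        good_linf g₁' g₂'
          (fun j h1 h2 => coordSub_pred_disjoint hinf' h1 h2) hA'⟩⟩
  | linf h₁ h₂ hsp hA hA' ih₁ ih₂ =>
    obtain ⟨⟨P₁, g₁⟩, ⟨P₁', g₁'⟩⟩ := ih₁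
    obtain ⟨⟨P₂, g₂⟩, ⟨P₂', g₂'⟩⟩ := ih₂
    have hinf : coordSub P₁ ⊓ coordSub P₂ = ⊥ := by
      rw [← g₁.2.2.2.2.1, ← g₂.2.2.2.2.1]
      exact le_bot_iff.1 (le_trans (inf_le_inf
        (Submodule.span_mono Set.subset_union_left)
        (Submodule.span_mono Set.subset_union_left)) (le_of_eq hsp))
    have hinf' : coordSub P₁' ⊓ coordSub P₂' = ⊥ := by
      rw [← g₁'.2.2.2.2.1, ← g₂'.2.2.2.2.1]
      exact le_bot_iff.1 (le_trans (inf_le_inf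
        (Submodule.span_mono Set.subset_union_right)
        (Submodule.span_mono Set.subset_union_right)) (le_of_eq hsp))
    exact ⟨⟨fun j => P₁ j ∨ P₂ j,
        good_linf g₁ g₂
          (fun j h1 h2 => coordSub_pred_disjoint hinf h1 h2) hA⟩,
      ⟨fun j => P₁' j ∨ P₂' j,
        good_l1 g₁' g₂'
          (fun j h1 h2 => coordSub_pred_disjoint hinf' h1 h2) hA'⟩⟩

end HannerAux
end AuxHanner

/-- **Lemma 6.5.** For a vertex `v` of a standard Hanner polytope `H`, the associated affine
subspace `A_v` of the zero-dimensional face `{v}` satisfies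
`A_v ∩ ℝ^(v) = A_v | ℝ^(v)` (intersection with `ℝ^(v)` equals orthogonal projection
onto `ℝ^(v)`). -/
theorem vertex_subspace_section_eq_projection (n : ℕ) (H H' : Set (Euc n))
    (A A' : Set (Euc n) → Set (Euc n)) (hH : StdHannerRep H A H' A')
    (hspan : Submodule.span ℝ H = ⊤) (v : Euc n) (hv : IsFaceOf H {v}) :
    A {v} ∩ (suppSpan v : Set (Euc n)) = projSet (suppSpan v) (A {v}) := by
  have hGood : (∃ P, HannerAux.Good H A P) ∧ (∃ P, HannerAux.Good H' A' P) :=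
    HannerAux.good_of_rep hH
  obtain ⟨⟨P, g⟩, -⟩ := hGood
  have hface : IsFaceIn (Submodule.span ℝ H) H {v} := by
    rw [hspan]
    exact hv
  obtain ⟨X, Y, hAeq, hX, hY0, hY⟩ := g.2.2.2.2.2 v hface
  refine HannerAux.sect_eq_proj hAeq hX hY0 ?_
  have horth : ((suppSpan v)ᗮ : Submodule ℝ (Euc n)) =
      HannerAux.coordSub (fun j => ¬ v j ≠ 0) := by
    rw [HannerAux.suppSpan_eq, HannerAux.coordSub_orthogonal]
  intro y hy
  rw [SetLike.mem_coe] at *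
  rw [horth]
  exact HannerAux.coordSub_mono (fun j hj hne => hne hj.2) (hY hy)
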